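/- With the protocol from the previous context: for every k ≥ 0 and every ℓ with 1 ≤ ℓ ≤ 2^(k+1), starting from the configuration with one agent in state 1, k agents in state a, one agent in state c, no agents in state d, and at least 2^(k+1) agents in state b, there is a reachable configuration in which the total count of agents in states c and d equals ℓ. -/
import Mathlib


/-- A configuration of the doubling protocol on states `{1,2,3,4,a,b,c,d}`,
recorded as counts of agents in each state. -/
structure Conf where
  n1 : ℕ
  n2 : ℕ
  n3 : ℕ
  n4 : ℕ
  a : ℕ
  b : ℕ
  c : ℕ
  d : ℕ

/-- One step of the protocol with transitions
`1c→2d, 2b→1d, 1a→3b, 3d→4c, 4b→3c, 3a→1b` (all other interactions are no-ops,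
which do not change the count vector). -/
def DStep (C C' : Conf) : Prop :=
  (1 ≤ C.n1 ∧ 1 ≤ C.c ∧ C' = ⟨C.n1 - 1, C.n2 + 1, C.n3, C.n4, C.a, C.b, C.c - 1, C.d + 1⟩) ∨
  (1 ≤ C.n2 ∧ 1 ≤ C.b ∧ C' = ⟨C.n1 + 1, C.n2 - 1, C.n3, C.n4, C.a, C.b - 1, C.c, C.d + 1⟩) ∨
  (1 ≤ C.n1 ∧ 1 ≤ C.a ∧ C' = ⟨C.n1 - 1, C.n2, C.n3 + 1, C.n4, C.a - 1, C.b + 1, C.c, C.d⟩) ∨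
  (1 ≤ C.n3 ∧ 1 ≤ C.d ∧ C' = ⟨C.n1, C.n2, C.n3 - 1, C.n4 + 1, C.a, C.b, C.c + 1, C.d - 1⟩) ∨
  (1 ≤ C.n4 ∧ 1 ≤ C.b ∧ C' = ⟨C.n1, C.n2, C.n3 + 1, C.n4 - 1, C.a, C.b - 1, C.c + 1, C.d⟩) ∨
  (1 ≤ C.n3 ∧ 1 ≤ C.a ∧ C' = ⟨C.n1 + 1, C.n2, C.n3 - 1, C.n4, C.a - 1, C.b + 1, C.c, C.d⟩)

/-- `C` has exactly one agent in a numbered state. -/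
def OneNumbered (C : Conf) : Prop :=
  C.n1 + C.n2 + C.n3 + C.n4 = 1

/-- The potential function `f` (meaningful when `C` has exactly one numbered agent). -/
def fPot (C : Conf) : ℕ :=
  if C.n1 = 1 then 2 ^ C.a * (2 * C.c + C.d)
  else if C.n2 = 1 then 2 ^ C.a * (2 * C.c + C.d + 1)
  else if C.n3 = 1 then 2 ^ C.a * (2 * C.d + C.c)
  else 2 ^ C.a * (2 * C.d + C.c + 1)

/-- From the configuration with one agent in state 1, `k` agents in state `a`, one in
state `c`, none in `d`, and at least `2^(k+1)` agents in state `b`, every value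
`1 ≤ ℓ ≤ 2^(k+1)` occurs as the combined `c`/`d` count of some reachable configuration. -/
lemma step_total_le {C C' : Conf} (h : DStep C C') :
    C'.c + C'.d ≤ C.c + C.d + 1 := by
  rcases h with ⟨h1,h2,rfl⟩|⟨h1,h2,rfl⟩|⟨h1,h2,rfl⟩|⟨h1,h2,rfl⟩|⟨h1,h2,rfl⟩|⟨h1,h2,rfl⟩ <;>
    dsimp <;> omega

lemma doubleC (a b c d : ℕ) (h : c ≤ b) :
    Relation.ReflTransGen DStep ⟨1,0,0,0,a,b,c,d⟩ ⟨1,0,0,0,a,b-c,0,d+2*c⟩ := by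
  induction c generalizing b d with
  | zero => exact .refl
  | succ n ih =>
    have s1 : DStep ⟨1,0,0,0,a,b,n+1,d⟩ ⟨0,1,0,0,a,b,n,d+1⟩ :=
      Or.inl ⟨le_refl 1, Nat.le_add_left 1 n, rfl⟩
    have s2 : DStep ⟨0,1,0,0,a,b,n,d+1⟩ ⟨1,0,0,0,a,b-1,n,d+2⟩ :=
      Or.inr (Or.inl ⟨le_refl 1, show 1 ≤ b by omega, rfl⟩)
    have ih' := ih (b-1) (d+2) (by omega)
    have e1 : b - 1 - n = b - (n+1) := by omega
    have e2 : d + 2 + 2*n = d + 2*(n+1) := by omega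
    rw [e1, e2] at ih'
    exact .head s1 (.head s2 ih')

lemma doubleD (a b c d : ℕ) (h : d ≤ b) :
    Relation.ReflTransGen DStep ⟨0,0,1,0,a,b,c,d⟩ ⟨0,0,1,0,a,b-d,c+2*d,0⟩ := by
  induction d generalizing b c with
  | zero => exact .refl
  | succ n ih =>
    have s1 : DStep ⟨0,0,1,0,a,b,c,n+1⟩ ⟨0,0,0,1,a,b,c+1,n⟩ :=
      Or.inr (Or.inr (Or.inr (Or.inl ⟨le_refl 1, Nat.le_add_left 1 n, rfl⟩)))
    have s2 : DStep ⟨0,0,0,1,a,b,c+1,n⟩ ⟨0,0,1,0,a,b-1,c+2,n⟩ :=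
      Or.inr (Or.inr (Or.inr (Or.inr (Or.inl ⟨le_refl 1, show 1 ≤ b by omega, rfl⟩))))
    have ih' := ih (b-1) (c+2) (by omega)
    have e1 : b - 1 - n = b - (n+1) := by omega
    have e2 : c + 2 + 2*n = c + 2*(n+1) := by omega
    rw [e1, e2] at ih'
    exact .head s1 (.head s2 ih')

lemma reach_max : ∀ k B c, 1 ≤ c → 2^(k+1)*c ≤ B + c →
    ∃ C', Relation.ReflTransGen DStep ⟨1,0,0,0,k,B,c,0⟩ C' ∧ C'.c + C'.d = 2^(k+1)*c := by
  intro k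
  induction k using Nat.strong_induction_on with
  | _ k ih =>
    intro B c hc hB
    match k with
    | 0 =>
      have hcB : c ≤ B := by
        have h2 : 2^(0+1)*c = 2*c := by norm_num
        rw [h2] at hB; omega
      refine ⟨⟨1,0,0,0,0,B-c,0,0+2*c⟩, doubleC 0 B c 0 hcB, ?_⟩
      have h2 : (2:ℕ)^(0+1) = 2 := by norm_num
      rw [h2]; dsimp; omega
    | m+1 =>
      have h4 : 4 ≤ 2^(m+1+1) := by
        calc (4:ℕ) = 2^2 := by norm_num
        _ ≤ 2^(m+1+1) := Nat.pow_le_pow_right (by norm_num) (by omega)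
      have h4c : 4*c ≤ B + c := le_trans (Nat.mul_le_mul_right c h4) hB
      have h3c : 3*c ≤ B := by omega
      have p1 := doubleC (m+1) B c 0 (by omega)
      have s1 : DStep ⟨1,0,0,0,m+1,B-c,0,0+2*c⟩ ⟨0,0,1,0,m,B-c+1,0,0+2*c⟩ :=
        Or.inr (Or.inr (Or.inl ⟨le_refl 1, Nat.le_add_left 1 m, rfl⟩))
      have p2 := doubleD m (B-c+1) 0 (0+2*c) (by omega)
      -- p2 ends at ⟨0,0,1,0,m,B-c+1-(0+2*c),0+2*(0+2*c),0⟩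
      match m with
      | 0 =>
        refine ⟨_, (p1.tail s1).trans p2, ?_⟩
        have h2 : (2:ℕ)^(0+1+1) = 4 := by norm_num
        rw [h2]; dsimp; omega
      | p+1 =>
        have s2 : DStep ⟨0,0,1,0,p+1,B-c+1-(0+2*c),0+2*(0+2*c),0⟩
            ⟨1,0,0,0,p,B-c+1-(0+2*c)+1,0+2*(0+2*c),0⟩ :=
          Or.inr (Or.inr (Or.inr (Or.inr (Or.inr ⟨le_refl 1, Nat.le_add_left 1 p, rfl⟩))))
        have eb : B-c+1-(0+2*c)+1 = B-3*c+2 := by omega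
        have ec : 0+2*(0+2*c) = 4*c := by omega
        have hq : (2:ℕ)^(p+1+1+1) = 2^(p+1)*4 := by rw [pow_succ, pow_succ]; ring
        have hB' : 4*(2^(p+1)*c) ≤ B + c := by
          calc 4*(2^(p+1)*c) = 2^(p+1+1+1)*c := by rw [hq]; ring
          _ ≤ B + c := hB
        have hB'' : 2^(p+1)*(4*c) ≤ (B-3*c+2) + 4*c := by
          have : 2^(p+1)*(4*c) = 4*(2^(p+1)*c) := by ring
          omega
        obtain ⟨C', hC', htot⟩ := ih p (by omega) (B-3*c+2) (4*c) (by omega) hB''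
        rw [← eb, ← ec] at hC'
        refine ⟨C', ((p1.tail s1).trans p2).trans (Relation.ReflTransGen.head s2 hC'), ?_⟩
        rw [htot, hq]; ring

lemma intermediate (ℓ : ℕ) {C0 C1 : Conf} (h : Relation.ReflTransGen DStep C0 C1)
    (h1 : C0.c + C0.d ≤ ℓ) (h2 : ℓ ≤ C1.c + C1.d) :
    ∃ C', Relation.ReflTransGen DStep C0 C' ∧ C'.c + C'.d = ℓ := by
  induction h with
  | refl => exact ⟨C0, .refl, by omega⟩
  | @tail b c hab hbc ihh =>
    by_cases hle : ℓ ≤ b.c + b.d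
    · exact ihh hle
    · exact ⟨c, hab.tail hbc, by have := step_total_le hbc; omega⟩

theorem reach_every_value (k B ℓ : ℕ) (hB : 2 ^ (k + 1) ≤ B)
    (hℓ1 : 1 ≤ ℓ) (hℓ2 : ℓ ≤ 2 ^ (k + 1)) :
    ∃ C' : Conf,
      Relation.ReflTransGen DStep ⟨1, 0, 0, 0, k, B, 1, 0⟩ C' ∧
      C'.c + C'.d = ℓ := by
  obtain ⟨C1, hC1, htot⟩ := reach_max k B 1 le_rfl (by omega)
  exact intermediate ℓ hC1 (by dsimp; omega) (by omega)
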